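/- If real parameters satisfy 2|α| < ν, then for z = x + iy, I_n(z, z̄ | ξ) = 2^{-n} · ∑_{k=0}^{n} (-i)^k · C(n,k) · H^{ν-2α}_{n-k}(x - Re(ξ)/(ν-2α)) · H^{ν+2α}_{k}(y + Im(ξ)/(ν+2α)), where H^τ_m is the rescaled Hermite polynomial H^τ_m(t) = (-1)^m e^{τt²} (d/dt)^m e^{-τt²}. -/

import Mathlib

open Complex

noncomputable def Ic (ν α ξ z w : ℂ) : ℕ → ℂ
  | 0 => 1
  | 1 => ν * w - 2 * α * z - ξ
  | (n + 2) => (ν * w - 2 * α * z - ξ) * Ic ν α ξ z w (n + 1)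
      + 2 * α * (n + 1) * Ic ν α ξ z w n

noncomputable def Hresc (τ : ℝ) (m : ℕ) (t : ℝ) : ℝ :=
  (-1 : ℝ) ^ m * Real.exp (τ * t ^ 2) *
    iteratedDeriv m (fun s : ℝ => Real.exp (-τ * s ^ 2)) t

noncomputable def Qp (τ : ℝ) : ℕ → Polynomial ℝ
  | 0 => 1
  | (m + 1) => Polynomial.C (2 * τ) * Polynomial.X * Qp τ m
      - Polynomial.derivative (Qp τ m)

lemma Qp_deriv (τ : ℝ) : ∀ m : ℕ, Polynomial.derivative (Qp τ (m + 1)) =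
    Polynomial.C (2 * τ * (m + 1)) * Qp τ m := by
  intro m
  induction m with
  | zero => simp [Qp]
  | succ m ih =>
      show Polynomial.derivative (Polynomial.C (2*τ) * Polynomial.X * Qp τ (m+1)
          - Polynomial.derivative (Qp τ (m+1))) = _
      rw [Polynomial.derivative_sub, Polynomial.derivative_mul, Polynomial.derivative_mul,
        Polynomial.derivative_C, Polynomial.derivative_X, ih, Polynomial.derivative_C_mul]
      have hQ1 : Qp τ (m+1) = Polynomial.C (2*τ) * Polynomial.X * Qp τ m
          - Polynomial.derivative (Qp τ m) := rfl
      have h1 : (2*τ*(((m+1 : ℕ):ℝ)+1)) = 2*τ + 2*τ*((m:ℝ)+1) := by push_cast; ring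
      rw [h1, Polynomial.C_add, hQ1]
      ring

lemma iteratedDeriv_gauss (τ : ℝ) (m : ℕ) (t : ℝ) :
    iteratedDeriv m (fun s : ℝ => Real.exp (-τ * s ^ 2)) t =
      (-1 : ℝ) ^ m * (Qp τ m).eval t * Real.exp (-τ * t ^ 2) := by
  induction m generalizing t with
  | zero => simp [Qp]
  | succ m ih =>
      rw [iteratedDeriv_succ]
      have hfun : iteratedDeriv m (fun s : ℝ => Real.exp (-τ * s ^ 2)) =
          fun u => (-1 : ℝ) ^ m * (Qp τ m).eval u * Real.exp (-τ * u ^ 2) := funext ih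
      rw [hfun]
      have h1 : HasDerivAt (fun u : ℝ => -τ * u ^ 2) (-τ * (2 * t)) t := by
        simpa using (hasDerivAt_pow 2 t).const_mul (-τ)
      have h2 : HasDerivAt (fun u : ℝ => Real.exp (-τ * u ^ 2))
          (Real.exp (-τ * t ^ 2) * (-τ * (2 * t))) t := h1.exp
      have h3 : HasDerivAt (fun u : ℝ => (-1 : ℝ) ^ m * (Qp τ m).eval u)
          ((-1 : ℝ) ^ m * (Polynomial.derivative (Qp τ m)).eval t) t :=
        ((Qp τ m).hasDerivAt t).const_mul _
      have h4 := h3.mul h2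
      rw [show (fun u : ℝ => (-1 : ℝ) ^ m * (Qp τ m).eval u * Real.exp (-τ * u ^ 2)) =
          ((fun u : ℝ => (-1 : ℝ) ^ m * (Qp τ m).eval u) * fun u => Real.exp (-τ * u ^ 2)) from rfl,
        h4.deriv]
      show _ = (-1:ℝ)^(m+1) * (Polynomial.C (2*τ) * Polynomial.X * Qp τ m
          - Polynomial.derivative (Qp τ m)).eval t * Real.exp (-τ*t^2)
      simp only [Polynomial.eval_mul, Polynomial.eval_sub, Polynomial.eval_C, Polynomial.eval_X]
      ring

lemma Hresc_eval (τ : ℝ) (m : ℕ) (t : ℝ) : Hresc τ m t = (Qp τ m).eval t := by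
  unfold Hresc
  rw [iteratedDeriv_gauss]
  have h1 : Real.exp (τ*t^2) * Real.exp (-τ*t^2) = 1 := by
    rw [← Real.exp_add]; ring_nf; exact Real.exp_zero
  have h2 : (-1:ℝ)^m * (-1:ℝ)^m = 1 := by
    rw [← pow_add, Even.neg_one_pow ⟨m, rfl⟩]
  calc (-1:ℝ)^m * Real.exp (τ*t^2) * ((-1:ℝ)^m * (Qp τ m).eval t * Real.exp (-τ*t^2))
      = ((-1:ℝ)^m * (-1:ℝ)^m) * (Real.exp (τ*t^2) * Real.exp (-τ*t^2)) * (Qp τ m).eval t := by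
        ring
    _ = (Qp τ m).eval t := by rw [h1, h2]; ring

lemma Hresc_zero (τ t : ℝ) : Hresc τ 0 t = 1 := by
  rw [Hresc_eval]; simp [Qp]

lemma Hresc_one (τ t : ℝ) : Hresc τ 1 t = 2 * τ * t := by
  rw [Hresc_eval]; simp [Qp]

lemma Hresc_rec (τ t : ℝ) (m : ℕ) :
    Hresc τ (m + 2) t = 2 * τ * t * Hresc τ (m + 1) t - 2 * τ * (m + 1) * Hresc τ m t := by
  rw [Hresc_eval, Hresc_eval, Hresc_eval]
  show (Polynomial.C (2*τ) * Polynomial.X * Qp τ (m+1)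
      - Polynomial.derivative (Qp τ (m+1))).eval t = _
  rw [Qp_deriv]
  simp only [Polynomial.eval_mul, Polynomial.eval_sub, Polynomial.eval_C, Polynomial.eval_X]

lemma Hc_rec (τ t : ℝ) (m : ℕ) :
    ((Hresc τ (m + 1) t : ℝ) : ℂ) =
      2 * (τ : ℂ) * (t : ℂ) * ((Hresc τ m t : ℝ) : ℂ)
        - 2 * (τ : ℂ) * (m : ℂ) * ((Hresc τ (m - 1) t : ℝ) : ℂ) := by
  cases m with
  | zero => simp [Hresc_one, Hresc_zero]
  | succ k => rw [Hresc_rec]; push_cast; ring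

noncomputable def Tn (a b x y : ℝ) (n : ℕ) : ℂ :=
  ∑ k ∈ Finset.range (n + 1),
    (-Complex.I) ^ k * (n.choose k : ℂ) *
      ((Hresc a (n - k) x : ℝ) : ℂ) * ((Hresc b k y : ℝ) : ℂ)

lemma Tn_zero (a b x y : ℝ) : Tn a b x y 0 = 1 := by
  simp [Tn, Hresc_zero]

lemma Tn_one (a b x y : ℝ) :
    Tn a b x y 1 = 2 * ((a : ℂ) * x) - 2 * Complex.I * ((b : ℂ) * y) := by
  simp [Tn, Finset.sum_range_succ, Hresc_zero, Hresc_one]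
  ring

lemma Tn_rec (a b x y : ℝ) (n : ℕ) :
    Tn a b x y (n + 2) =
      (2 * ((a : ℂ) * x) - 2 * Complex.I * ((b : ℂ) * y)) * Tn a b x y (n + 1)
        + 2 * ((b : ℂ) - (a : ℂ)) * (n + 1) * Tn a b x y n := by
  have E1 : ∑ k ∈ Finset.range (n+2), (-Complex.I)^k * ((n+1).choose k : ℂ) *
        ((Hresc a (n+2-k) x : ℝ):ℂ) * ((Hresc b k y : ℝ):ℂ)
      = (2*(a:ℂ)*x) * Tn a b x y (n+1) - 2*(a:ℂ)*((n:ℂ)+1) * Tn a b x y n := by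
    have step : ∀ k ∈ Finset.range (n+2),
        (-Complex.I)^k * ((n+1).choose k : ℂ) * ((Hresc a (n+2-k) x : ℝ):ℂ) *
          ((Hresc b k y : ℝ):ℂ)
        = (2*(a:ℂ)*x) * ((-Complex.I)^k * ((n+1).choose k : ℂ) *
            ((Hresc a (n+1-k) x : ℝ):ℂ) * ((Hresc b k y : ℝ):ℂ))
          - 2*(a:ℂ) * (((n:ℂ)+1) * ((-Complex.I)^k * ((n.choose k) : ℂ) *
            ((Hresc a (n-k) x : ℝ):ℂ) * ((Hresc b k y : ℝ):ℂ))) := by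
      intro k hk
      have hk' : k ≤ n + 1 := by
        simp only [Finset.mem_range] at hk; omega
      have h1 : n + 2 - k = (n + 1 - k) + 1 := by omega
      have h2 : (n + 1 - k) - 1 = n - k := by omega
      have hnat : (n + 1 - k) * (n+1).choose k = (n+1) * n.choose k := by
        rw [mul_comm, ← Nat.choose_succ_right_eq, ← Nat.add_one_mul_choose_eq]
      have h3 : ((n+1-k : ℕ) : ℂ) * ((n+1).choose k : ℂ) = ((n:ℂ)+1) * ((n.choose k) : ℂ) := by
        exact_mod_cast congrArg (Nat.cast : ℕ → ℂ) hnat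
      rw [h1, Hc_rec a x (n+1-k), h2]
      linear_combination (-(2:ℂ)*(a:ℂ)*((Hresc a (n-k) x : ℝ):ℂ)*((Hresc b k y : ℝ):ℂ)*
        (-Complex.I)^k) * h3
    rw [Finset.sum_congr rfl step, Finset.sum_sub_distrib, ← Finset.mul_sum, ← Finset.mul_sum]
    have hfst : ∑ k ∈ Finset.range (n+2), (-Complex.I)^k * ((n+1).choose k : ℂ) *
        ((Hresc a (n+1-k) x : ℝ):ℂ) * ((Hresc b k y : ℝ):ℂ) = Tn a b x y (n+1) := rfl
    have hsnd : ∑ k ∈ Finset.range (n+2), ((n:ℂ)+1) * ((-Complex.I)^k * ((n.choose k) : ℂ) *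
        ((Hresc a (n-k) x : ℝ):ℂ) * ((Hresc b k y : ℝ):ℂ))
        = ((n:ℂ)+1) * Tn a b x y n := by
      rw [← Finset.mul_sum, Finset.sum_range_succ]
      simp [Tn, Nat.choose_succ_self]
    rw [hfst, hsnd]
    ring
  have E2 : ∑ i ∈ Finset.range (n+2), (-Complex.I)^(i+1) * ((n+1).choose i : ℂ) *
        ((Hresc a (n+1-i) x : ℝ):ℂ) * ((Hresc b (i+1) y : ℝ):ℂ)
      = (-2*Complex.I*(b:ℂ)*y) * Tn a b x y (n+1) + 2*(b:ℂ)*((n:ℂ)+1) * Tn a b x y n := by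
    have step : ∀ i ∈ Finset.range (n+2),
        (-Complex.I)^(i+1) * ((n+1).choose i : ℂ) * ((Hresc a (n+1-i) x : ℝ):ℂ) *
          ((Hresc b (i+1) y : ℝ):ℂ)
        = (-2*Complex.I*(b:ℂ)*y) * ((-Complex.I)^i * ((n+1).choose i : ℂ) *
            ((Hresc a (n+1-i) x : ℝ):ℂ) * ((Hresc b i y : ℝ):ℂ))
          + (-Complex.I)^(i+1) * ((n+1).choose i : ℂ) * ((Hresc a (n+1-i) x : ℝ):ℂ) *
            (-(2*(b:ℂ)*(i:ℂ))) * ((Hresc b (i-1) y : ℝ):ℂ) := by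
      intro i _
      rw [Hc_rec b y i, pow_succ]
      ring
    rw [Finset.sum_congr rfl step, Finset.sum_add_distrib, ← Finset.mul_sum]
    have hfst : ∑ i ∈ Finset.range (n+2), (-Complex.I)^i * ((n+1).choose i : ℂ) *
        ((Hresc a (n+1-i) x : ℝ):ℂ) * ((Hresc b i y : ℝ):ℂ) = Tn a b x y (n+1) := rfl
    rw [hfst]
    have hsnd : ∑ i ∈ Finset.range (n+2), (-Complex.I)^(i+1) * ((n+1).choose i : ℂ) *
        ((Hresc a (n+1-i) x : ℝ):ℂ) * (-(2*(b:ℂ)*(i:ℂ))) * ((Hresc b (i-1) y : ℝ):ℂ)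
        = 2*(b:ℂ)*((n:ℂ)+1) * Tn a b x y n := by
      rw [Finset.sum_range_succ']
      have h0 : (-Complex.I)^(0+1) * ((n+1).choose 0 : ℂ) *
          ((Hresc a (n+1-0) x : ℝ):ℂ) * (-(2*(b:ℂ)*((0:ℕ):ℂ))) * ((Hresc b (0-1) y : ℝ):ℂ)
          = 0 := by simp
      rw [h0, add_zero]
      have step2 : ∀ m ∈ Finset.range (n+1),
          (-Complex.I)^(m+1+1) * ((n+1).choose (m+1) : ℂ) *
            ((Hresc a (n+1-(m+1)) x : ℝ):ℂ) * (-(2*(b:ℂ)*((m+1:ℕ):ℂ))) *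
            ((Hresc b (m+1-1) y : ℝ):ℂ)
          = 2*(b:ℂ)*((n:ℂ)+1) * ((-Complex.I)^m * ((n.choose m) : ℂ) *
              ((Hresc a (n-m) x : ℝ):ℂ) * ((Hresc b m y : ℝ):ℂ)) := by
        intro m _
        have h1 : n + 1 - (m+1) = n - m := by omega
        have h2 : m + 1 - 1 = m := by omega
        have hnat : (n+1) * n.choose m = (n+1).choose (m+1) * (m+1) :=
          Nat.add_one_mul_choose_eq n m
        have h3 : ((n:ℂ)+1) * ((n.choose m) : ℂ) = ((n+1).choose (m+1) : ℂ) * ((m:ℂ)+1) := by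
          exact_mod_cast congrArg (Nat.cast : ℕ → ℂ) hnat
        have hpow : (-Complex.I)^(m+1+1) = -((-Complex.I)^m) := by
          rw [pow_succ, pow_succ]
          simp [Complex.I_mul_I]
          ring_nf
          rw [Complex.I_sq]
          ring
        rw [h1, h2, hpow]
        push_cast
        linear_combination (-(2:ℂ)*(b:ℂ)*((Hresc a (n-m) x : ℝ):ℂ)*((Hresc b m y : ℝ):ℂ)*
          (-Complex.I)^m) * h3
      rw [Finset.sum_congr rfl step2, ← Finset.mul_sum]
      rfl
    rw [hsnd]
  have E3 : Tn a b x y (n+2) =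
      (∑ k ∈ Finset.range (n+2), (-Complex.I)^k * ((n+1).choose k : ℂ) *
        ((Hresc a (n+2-k) x : ℝ):ℂ) * ((Hresc b k y : ℝ):ℂ))
      + ∑ i ∈ Finset.range (n+2), (-Complex.I)^(i+1) * ((n+1).choose i : ℂ) *
        ((Hresc a (n+1-i) x : ℝ):ℂ) * ((Hresc b (i+1) y : ℝ):ℂ) := by
    show ∑ k ∈ Finset.range (n+2+1), (-Complex.I)^k * ((n+2).choose k : ℂ) *
        ((Hresc a (n+2-k) x : ℝ):ℂ) * ((Hresc b k y : ℝ):ℂ) = _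
    rw [Finset.sum_range_succ']
    have hsplit : ∀ i ∈ Finset.range (n+2),
        (-Complex.I)^(i+1) * ((n+2).choose (i+1) : ℂ) *
          ((Hresc a (n+2-(i+1)) x : ℝ):ℂ) * ((Hresc b (i+1) y : ℝ):ℂ)
        = (-Complex.I)^(i+1) * ((n+1).choose i : ℂ) *
            ((Hresc a (n+1-i) x : ℝ):ℂ) * ((Hresc b (i+1) y : ℝ):ℂ)
          + (-Complex.I)^(i+1) * ((n+1).choose (i+1) : ℂ) *
            ((Hresc a (n+1-i) x : ℝ):ℂ) * ((Hresc b (i+1) y : ℝ):ℂ) := by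
      intro i _
      have hc : (n+2).choose (i+1) = (n+1).choose i + (n+1).choose (i+1) :=
        Nat.choose_succ_succ _ _
      have h2 : n + 2 - (i+1) = n + 1 - i := by omega
      rw [hc, h2]
      push_cast
      ring
    rw [Finset.sum_congr rfl hsplit, Finset.sum_add_distrib]
    have hQ : ∑ i ∈ Finset.range (n+2), (-Complex.I)^(i+1) * ((n+1).choose (i+1) : ℂ) *
          ((Hresc a (n+1-i) x : ℝ):ℂ) * ((Hresc b (i+1) y : ℝ):ℂ)
        = ∑ i ∈ Finset.range (n+1), (-Complex.I)^(i+1) * ((n+1).choose (i+1) : ℂ) *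
          ((Hresc a (n+1-i) x : ℝ):ℂ) * ((Hresc b (i+1) y : ℝ):ℂ) := by
      rw [Finset.sum_range_succ]
      simp [Nat.choose_succ_self]
    have hE1' : ∑ k ∈ Finset.range (n+2), (-Complex.I)^k * ((n+1).choose k : ℂ) *
          ((Hresc a (n+2-k) x : ℝ):ℂ) * ((Hresc b k y : ℝ):ℂ)
        = (∑ i ∈ Finset.range (n+1), (-Complex.I)^(i+1) * ((n+1).choose (i+1) : ℂ) *
            ((Hresc a (n+1-i) x : ℝ):ℂ) * ((Hresc b (i+1) y : ℝ):ℂ))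
          + (-Complex.I)^0 * ((n+1).choose 0 : ℂ) *
            ((Hresc a (n+2-0) x : ℝ):ℂ) * ((Hresc b 0 y : ℝ):ℂ) := by
      rw [Finset.sum_range_succ']
      congr 1
      apply Finset.sum_congr rfl
      intro i _
      have h2 : n + 2 - (i+1) = n + 1 - i := by omega
      rw [h2]
    rw [hQ, hE1']
    simp only [Nat.choose_zero_right, Nat.cast_one, pow_zero]
    ring
  rw [E3, E1, E2]
  ring

theorem stmt7 (ν α : ℝ) (hνα : 2 * |α| < ν) (ξ z : ℂ) (n : ℕ) :
    Ic (ν : ℂ) (α : ℂ) ξ z (starRingEnd ℂ z) n =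
      (1 / 2 ^ n : ℂ) *
        ∑ k ∈ Finset.range (n + 1),
          (-Complex.I) ^ k * (n.choose k : ℂ) *
            ((Hresc (ν - 2 * α) (n - k) (z.re - ξ.re / (ν - 2 * α)) : ℝ) : ℂ) *
            ((Hresc (ν + 2 * α) k (z.im + ξ.im / (ν + 2 * α)) : ℝ) : ℂ) := by
  have hapos : 0 < ν - 2 * α := by nlinarith [le_abs_self α]
  have hbpos : 0 < ν + 2 * α := by nlinarith [neg_abs_le α]
  have ha0 : ν - 2 * α ≠ 0 := ne_of_gt hapos
  have hb0 : ν + 2 * α ≠ 0 := ne_of_gt hbpos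
  set a := ν - 2 * α with hadef
  set b := ν + 2 * α with hbdef
  set x := z.re - ξ.re / a with hxdef
  set y := z.im + ξ.im / b with hydef
  have hI1 : (ν:ℂ) * (starRingEnd ℂ z) - 2*(α:ℂ)*z - ξ
      = ((a:ℂ) * (x:ℂ)) - Complex.I * ((b:ℂ) * (y:ℂ)) := by
    have hx : (a:ℝ) * x = a * z.re - ξ.re := by
      rw [hxdef]; field_simp
    have hy : (b:ℝ) * y = b * z.im + ξ.im := by
      rw [hydef]; field_simp
    have hx' : (a:ℂ) * (x:ℂ) = ((a * z.re - ξ.re : ℝ) : ℂ) := by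
      rw [← hx]; push_cast; ring
    have hy' : (b:ℂ) * (y:ℂ) = ((b * z.im + ξ.im : ℝ) : ℂ) := by
      rw [← hy]; push_cast; ring
    have h2c : (2:ℂ)*(α:ℂ) = ((2*α : ℝ):ℂ) := by push_cast; ring
    rw [hx', hy', mul_assoc ((2:ℂ)) ((α:ℂ)) z, ← mul_assoc, h2c]
    apply Complex.ext <;>
      simp [Complex.mul_re, Complex.mul_im, hadef, hbdef] <;> ring
  suffices h : ∀ m, Ic (ν:ℂ) (α:ℂ) ξ z (starRingEnd ℂ z) m
      = (1/2^m : ℂ) * Tn a b x y m by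
    rw [h n]
    rfl
  intro m
  induction m using Nat.twoStepInduction with
  | zero => simp [Ic, Tn_zero]
  | one =>
      have h1 : Ic (ν:ℂ) (α:ℂ) ξ z (starRingEnd ℂ z) 1
          = (ν:ℂ)*(starRingEnd ℂ z) - 2*(α:ℂ)*z - ξ := by simp [Ic]
      rw [h1, hI1, Tn_one]
      ring
  | more m ih1 ih2 =>
      have hrec : Ic (ν:ℂ) (α:ℂ) ξ z (starRingEnd ℂ z) (m+2)
          = ((ν:ℂ)*(starRingEnd ℂ z) - 2*(α:ℂ)*z - ξ) *
              Ic (ν:ℂ) (α:ℂ) ξ z (starRingEnd ℂ z) (m+1)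
            + 2*(α:ℂ)*((m:ℂ)+1) * Ic (ν:ℂ) (α:ℂ) ξ z (starRingEnd ℂ z) m := by
        simp [Ic]
      rw [hrec, ih1, ih2, hI1, Tn_rec]
      have hba : (b:ℂ) - (a:ℂ) = 4*(α:ℂ) := by
        rw [hadef, hbdef]; push_cast; ring
      rw [hba]
      have h2 : (2:ℂ)^m ≠ 0 := pow_ne_zero _ two_ne_zero
      field_simp
      ring
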